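/- A Lie algebra that is a direct sum 𝔤 = 𝔤₁ ⊕ 𝔤₂ of two ideals carries a contact form if and only if one of the ideals carries a contact form and the other carries an exact symplectic form. -/

import Mathlib

open Module

/-- `η` is a contact form on the odd-dimensional real Lie algebra `L`: equivalently to the
condition `(∂η)^n ∧ η ≠ 0` (with `dim L = 2n+1`, `∂η (x,y) = -η ⁅x,y⁆`), `η ≠ 0` and the
2-form `∂η` is nondegenerate on the kernel of `η`. -/
def IsContactForm {L : Type*} [LieRing L] [LieAlgebra ℝ L] (η : Module.Dual ℝ L) : Prop :=
  η ≠ 0 ∧ ∀ x : L, η x = 0 → (∀ y : L, η y = 0 → η ⁅x, y⁆ = 0) → x = 0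

/-- `α` is an exact symplectic form on the even-dimensional real Lie algebra `L`:
equivalently to `(∂α)^m ≠ 0` (with `dim L = 2m`), the 2-form `∂α (x,y) = -α ⁅x,y⁆`
is nondegenerate. -/
def IsExactSymplecticForm {L : Type*} [LieRing L] [LieAlgebra ℝ L] (α : Module.Dual ℝ L) : Prop :=
  ∀ x : L, (∀ y : L, α ⁅x, y⁆ = 0) → x = 0

/-- Every contact form on a finite-dimensional Lie algebra admits a "Reeb vector":
an element `v` with `η v ≠ 0` on which the 2-form `∂η` is totally degenerate. -/
theorem exists_reeb_vector {M : Type*} [LieRing M] [LieAlgebra ℝ M] [FiniteDimensional ℝ M]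
    (η : Module.Dual ℝ M)
    (hη : η ≠ 0 ∧ ∀ x : M, η x = 0 → (∀ y : M, η y = 0 → η ⁅x, y⁆ = 0) → x = 0) :
    ∃ v : M, η v ≠ 0 ∧ ∀ y : M, η ⁅v, y⁆ = 0 := by
  obtain ⟨hne, hnd⟩ := hη
  set H : Submodule ℝ M := LinearMap.ker η with hH
  let f : M →ₗ[ℝ] Module.Dual ℝ ↥H :=
    { toFun := fun x => η ∘ₗ (LieAlgebra.ad ℝ M x) ∘ₗ H.subtype
      map_add' := fun x y => by ext z; simp [add_lie]
      map_smul' := fun c x => by ext z; simp [smul_lie] }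
  have hHne : H ≠ ⊤ := by
    intro h
    apply hne
    ext w
    have : w ∈ H := h ▸ Submodule.mem_top
    simpa [hH] using this
  have hker : LinearMap.ker f ≠ ⊥ := by
    intro h
    have hinj := LinearMap.ker_eq_bot.mp h
    have h1 : finrank ℝ M ≤ finrank ℝ (Module.Dual ℝ ↥H) :=
      LinearMap.finrank_le_finrank_of_injective hinj
    rw [Subspace.dual_finrank_eq] at h1
    exact absurd (lt_of_le_of_lt h1 (Submodule.finrank_lt hHne))
      (lt_irrefl _)
  obtain ⟨v, hv, hv0⟩ := Submodule.exists_mem_ne_zero_of_ne_bot hker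
  have hfv : (f v : Module.Dual ℝ ↥H) = 0 := LinearMap.mem_ker.mp hv
  have hvH : ∀ z : M, η z = 0 → η ⁅v, z⁆ = 0 := by
    intro z hz
    have : f v ⟨z, by simpa [hH] using hz⟩ = 0 := by rw [hfv]; rfl
    simpa [f, LieAlgebra.ad_apply] using this
  have hηv : η v ≠ 0 := by
    intro h
    exact hv0 (hnd v h (fun y hy => hvH y hy))
  refine ⟨v, hηv, fun y => ?_⟩
  have hz : η (y - (η y / η v) • v) = 0 := by
    simp only [map_sub, map_smul, smul_eq_mul]
    field_simp
    simp
  have h1 := hvH _ hz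
  have h2 : ⁅v, y - (η y / η v) • v⁆ = ⁅v, y⁆ - (η y / η v) • ⁅v, v⁆ := by
    rw [lie_sub, lie_smul]
  rw [h2, lie_self, smul_zero, sub_zero] at h1
  exact h1

/-- The restriction of a dual form to a Lie ideal. -/
noncomputable def restrictDual {L : Type*} [LieRing L] [LieAlgebra ℝ L]
    (I : LieIdeal ℝ L) (η : Module.Dual ℝ L) : Module.Dual ℝ ↥I :=
  η.comp I.toSubmodule.subtype

theorem restrictDual_apply {L : Type*} [LieRing L] [LieAlgebra ℝ L]
    (I : LieIdeal ℝ L) (η : Module.Dual ℝ L) (x : ↥I) : restrictDual I η x = η ↑x := rfl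

/-- Forward auxiliary lemma: if `η` is contact on `L = I₁ ⊕ I₂` and there is a nonzero
radical vector of `∂η` lying in `I₂`, then `η` restricts to an exact symplectic form on
`I₁` and a contact form on `I₂`. -/
theorem forward_aux {L : Type*} [LieRing L] [LieAlgebra ℝ L]
    (I₁ I₂ : LieIdeal ℝ L) (hcompl : IsCompl I₁.toSubmodule I₂.toSubmodule)
    (hdis : ∀ a b : L, a ∈ I₁ → b ∈ I₂ → ⁅a, b⁆ = 0)
    (η : Module.Dual ℝ L) (hη : IsContactForm η)
    (v : L) (hv2 : v ∈ I₂) (hv0 : v ≠ 0) (hrad : ∀ y : L, η ⁅v, y⁆ = 0) :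
    IsExactSymplecticForm (restrictDual I₁ η) ∧ IsContactForm (restrictDual I₂ η) := by
  obtain ⟨hne, hnd⟩ := hη
  have hηv : η v ≠ 0 := by
    intro h
    exact hv0 (hnd v h (fun y _ => hrad y))
  constructor
  · -- exact symplectic on I₁
    intro x hx
    -- x is in the radical of ∂η
    have hxrad : ∀ y : L, η ⁅(x : L), y⁆ = 0 := by
      intro y
      obtain ⟨y₁, y₂, hy₁, hy₂, rfl⟩ :=
        Submodule.codisjoint_iff_exists_add_eq.mp hcompl.codisjoint y
      have h2 : ⁅(x : L), y₂⁆ = 0 := hdis _ _ x.2 hy₂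
      have h1 : η ⁅(x : L), y₁⁆ = 0 := by
        have := hx ⟨y₁, hy₁⟩
        simpa [restrictDual_apply] using this
      rw [lie_add, map_add, h1, h2, map_zero, add_zero]
    by_cases hηx : η (x : L) = 0
    · have : (x : L) = 0 := hnd _ hηx (fun y _ => hxrad y)
      exact Subtype.ext this
    · exfalso
      set u : L := (η v) • (x : L) - (η (x : L)) • v with hu
      have hηu : η u = 0 := by simp [hu, mul_comm]
      have hurad : ∀ y : L, η y = 0 → η ⁅u, y⁆ = 0 := by
        intro y _
        simp [hu, sub_lie, smul_lie, hxrad y, hrad y]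
      have hu0 : u = 0 := hnd u hηu hurad
      have heq : (η v) • (x : L) = (η (x : L)) • v := by
        rwa [hu, sub_eq_zero] at hu0
      have hmem : (η v) • (x : L) ∈ I₁.toSubmodule ⊓ I₂.toSubmodule := by
        constructor
        · exact Submodule.smul_mem _ _ x.2
        · rw [heq]; exact Submodule.smul_mem _ _ hv2
      rw [hcompl.inf_eq_bot, Submodule.mem_bot] at hmem
      have : (x : L) = 0 := by
        have := smul_eq_zero.mp hmem
        tauto
      exact hηx (by rw [this, map_zero])
  · -- contact on I₂
    constructor
    · intro h
      apply hηv
      have := congrArg (fun φ => φ (⟨v, hv2⟩ : ↥I₂)) h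
      simpa [restrictDual_apply] using this
    · intro x hx hbr
      have hηx : η (x : L) = 0 := hx
      have hall : ∀ y : L, η ⁅(x : L), y⁆ = 0 := by
        intro y
        obtain ⟨y₁, y₂, hy₁, hy₂, rfl⟩ :=
          Submodule.codisjoint_iff_exists_add_eq.mp hcompl.codisjoint y
        have h1 : ⁅(x : L), y₁⁆ = 0 := by
          rw [← lie_skew, hdis _ _ hy₁ x.2, neg_zero]
        -- decompose y₂ = z + c • v with η z = 0
        set c : ℝ := η y₂ / η v with hc
        have hzmem : y₂ - c • v ∈ I₂ := I₂.toSubmodule.sub_mem hy₂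
          (Submodule.smul_mem _ _ hv2)
        have hzη : η (y₂ - c • v) = 0 := by
          simp only [map_sub, map_smul, smul_eq_mul, hc]
          field_simp
          simp
        have hz : η ⁅(x : L), y₂ - c • v⁆ = 0 := by
          have := hbr ⟨y₂ - c • v, hzmem⟩ (by simpa [restrictDual_apply] using hzη)
          simpa [restrictDual_apply] using this
        have hxv : η ⁅(x : L), v⁆ = 0 := by
          rw [← lie_skew, map_neg, hrad (x : L), neg_zero]
        have : η ⁅(x : L), y₂⁆ = 0 := by
          have hdec : ⁅(x : L), y₂⁆ = ⁅(x : L), y₂ - c • v⁆ + c • ⁅(x : L), v⁆ := by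
            rw [← lie_smul, ← lie_add, sub_add_cancel]
          rw [hdec, map_add, hz, map_smul, hxv, smul_zero, add_zero]
        rw [lie_add, map_add, h1, map_zero, zero_add, this]
      have : (x : L) = 0 := hnd _ hηx (fun y _ => hall y)
      exact Subtype.ext this

/-- Backward auxiliary lemma: an exact symplectic form on `I₁` and a contact form on `I₂`
combine to a contact form on `L = I₁ ⊕ I₂`. -/
theorem backward_aux {L : Type*} [LieRing L] [LieAlgebra ℝ L] [FiniteDimensional ℝ L]
    (I₁ I₂ : LieIdeal ℝ L) (hcompl : IsCompl I₁.toSubmodule I₂.toSubmodule)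
    (hdis : ∀ a b : L, a ∈ I₁ → b ∈ I₂ → ⁅a, b⁆ = 0)
    (α₁ : Module.Dual ℝ ↥I₁) (hα : IsExactSymplecticForm α₁)
    (η₂ : Module.Dual ℝ ↥I₂) (hη : IsContactForm η₂) :
    ∃ η : Module.Dual ℝ L, IsContactForm η := by
  classical
  set p₁ : L →ₗ[ℝ] ↥I₁.toSubmodule :=
    I₁.toSubmodule.linearProjOfIsCompl I₂.toSubmodule hcompl with hp₁
  set p₂ : L →ₗ[ℝ] ↥I₂.toSubmodule :=
    I₂.toSubmodule.linearProjOfIsCompl I₁.toSubmodule hcompl.symm with hp₂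
  set η : Module.Dual ℝ L := α₁.comp p₁ + η₂.comp p₂ with hηdef
  have hη1 : ∀ x : ↥I₁, η ↑x = α₁ x := by
    intro x
    have e1 : p₁ ↑x = ⟨↑x, x.2⟩ := Submodule.linearProjOfIsCompl_apply_left hcompl ⟨↑x, x.2⟩
    have e2 : p₂ ↑x = 0 := Submodule.projectionOnto_apply_of_mem_right hcompl.symm x.2
    show α₁ (p₁ ↑x) + η₂ (p₂ ↑x) = α₁ x
    rw [e1, e2, map_zero, add_zero]; rfl
  have hη2 : ∀ x : ↥I₂, η ↑x = η₂ x := by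
    intro x
    have e1 : p₂ ↑x = ⟨↑x, x.2⟩ :=
      Submodule.linearProjOfIsCompl_apply_left hcompl.symm ⟨↑x, x.2⟩
    have e2 : p₁ ↑x = 0 := Submodule.projectionOnto_apply_of_mem_right hcompl x.2
    show α₁ (p₁ ↑x) + η₂ (p₂ ↑x) = η₂ x
    rw [e1, e2, map_zero, zero_add]; rfl
  -- Reeb vector for η₂ on I₂
  obtain ⟨ξ, hξ0, hξrad⟩ := exists_reeb_vector η₂ hη
  refine ⟨η, ?_, ?_⟩
  · -- η ≠ 0
    intro h
    apply hξ0
    rw [← hη2 ξ, h, LinearMap.zero_apply]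
  · intro x hx hbr
    obtain ⟨x₁, x₂, hx₁, hx₂, hxsum⟩ :=
      Submodule.codisjoint_iff_exists_add_eq.mp hcompl.codisjoint x
    -- first show the I₁-component vanishes
    have hx₁0 : x₁ = 0 := by
      have : (⟨x₁, hx₁⟩ : ↥I₁) = 0 := by
        apply hα
        intro y₁
        set c : ℝ := α₁ y₁ / η₂ ξ with hc
        set y : L := ↑y₁ - c • ↑ξ with hy
        have hηy : η y = 0 := by
          simp only [hy, map_sub, map_smul, hη1 y₁, hη2 ξ, smul_eq_mul, hc]
          field_simp
          simp
        have hbry := hbr y hηy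
        -- compute η ⁅x, y⁆
        have hb1 : ⁅x₁, (↑ξ : L)⁆ = 0 := hdis _ _ hx₁ ξ.2
        have hb2 : ⁅x₂, (↑y₁ : L)⁆ = 0 := by
          rw [← lie_skew, hdis _ _ y₁.2 hx₂, neg_zero]
        have hb3 : η ⁅x₂, (↑ξ : L)⁆ = 0 := by
          have h1 : ⁅x₂, (↑ξ : L)⁆ = ↑(⁅(⟨x₂, hx₂⟩ : ↥I₂), ξ⁆ : ↥I₂) := rfl
          rw [h1, hη2]
          have : ⁅(⟨x₂, hx₂⟩ : ↥I₂), ξ⁆ = -⁅ξ, (⟨x₂, hx₂⟩ : ↥I₂)⁆ := (lie_skew _ _).symm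
          rw [this, map_neg, hξrad, neg_zero]
        have hb4 : η ⁅x₁, (↑y₁ : L)⁆ = α₁ ⁅(⟨x₁, hx₁⟩ : ↥I₁), y₁⁆ := by
          have h1 : ⁅x₁, (↑y₁ : L)⁆ = ↑(⁅(⟨x₁, hx₁⟩ : ↥I₁), y₁⁆ : ↥I₁) := rfl
          rw [h1, hη1]
        have hcomp : ⁅x, y⁆ = ⁅x₁, (↑y₁ : L)⁆ - c • ⁅x₂, (↑ξ : L)⁆ := by
          rw [← hxsum, hy]
          simp only [add_lie, lie_sub, lie_smul, hb1, hb2]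
          module
        rw [hcomp, map_sub, map_smul, hb3, smul_zero, sub_zero, hb4] at hbry
        exact hbry
      simpa using congrArg (Subtype.val) this
    -- now the I₂-component
    have hx2eq : x = x₂ := by rw [← hxsum, hx₁0, zero_add]
    have hx₂0 : x₂ = 0 := by
      have : (⟨x₂, hx₂⟩ : ↥I₂) = 0 := by
        obtain ⟨_, hnd2⟩ := hη
        apply hnd2
        · have : η ↑(⟨x₂, hx₂⟩ : ↥I₂) = η₂ ⟨x₂, hx₂⟩ := hη2 _
          rw [← this]
          show η x₂ = 0
          rw [← hx2eq]; exact hx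
        · intro z hz
          have hηz : η ↑z = 0 := by rw [hη2]; exact hz
          have := hbr ↑z hηz
          rw [hx2eq] at this
          have h1 : ⁅x₂, (↑z : L)⁆ = ↑(⁅(⟨x₂, hx₂⟩ : ↥I₂), z⁆ : ↥I₂) := rfl
          rw [← hη2, ← h1]
          exact this
      simpa using congrArg (Subtype.val) this
    rw [← hxsum, hx₁0, hx₂0, add_zero]

/-- A Lie algebra which is the direct sum of two ideals carries a contact form iff one of
the ideals carries a contact form and the other an exact symplectic form. -/
theorem contact_direct_sum_iff {L : Type*} [LieRing L] [LieAlgebra ℝ L]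
    [FiniteDimensional ℝ L] (I₁ I₂ : LieIdeal ℝ L)
    (hcompl : IsCompl I₁.toSubmodule I₂.toSubmodule) :
    (∃ η : Module.Dual ℝ L, IsContactForm η) ↔
      ((∃ η₁ : Module.Dual ℝ ↥I₁, IsContactForm η₁) ∧
        (∃ α₂ : Module.Dual ℝ ↥I₂, IsExactSymplecticForm α₂)) ∨
      ((∃ α₁ : Module.Dual ℝ ↥I₁, IsExactSymplecticForm α₁) ∧
        (∃ η₂ : Module.Dual ℝ ↥I₂, IsContactForm η₂)) := by
  have hdis : ∀ a b : L, a ∈ I₁ → b ∈ I₂ → ⁅a, b⁆ = 0 := by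
    intro a b ha hb
    have h1 : ⁅a, b⁆ ∈ I₂ := lie_mem_right ℝ L I₂ a b hb
    have h2 : ⁅a, b⁆ ∈ I₁ := lie_mem_left ℝ L I₁ a b ha
    exact Submodule.disjoint_def.mp hcompl.disjoint _ h2 h1
  have hdis' : ∀ a b : L, a ∈ I₂ → b ∈ I₁ → ⁅a, b⁆ = 0 := fun a b ha hb => by
    rw [← lie_skew, hdis b a hb ha, neg_zero]
  constructor
  · rintro ⟨η, hη⟩
    obtain ⟨v, hηv, hrad⟩ := exists_reeb_vector η hη
    have hv0 : v ≠ 0 := fun h => hηv (by rw [h, map_zero])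
    obtain ⟨v₁, v₂, hv₁, hv₂, hsum⟩ :=
      Submodule.codisjoint_iff_exists_add_eq.mp hcompl.codisjoint v
    have hrad1 : ∀ y : L, η ⁅v₁, y⁆ = 0 := by
      intro y
      obtain ⟨y₁, y₂, hy₁, hy₂, rfl⟩ :=
        Submodule.codisjoint_iff_exists_add_eq.mp hcompl.codisjoint y
      have e2 : ⁅v₁, y₂⁆ = 0 := hdis _ _ hv₁ hy₂
      have e3 : ⁅v₂, y₁⁆ = 0 := hdis' _ _ hv₂ hy₁
      have e4 : η ⁅v₁, y₁⁆ = 0 := by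
        have h := hrad y₁
        rw [← hsum, add_lie, e3, add_zero] at h
        exact h
      rw [lie_add, map_add, e4, e2, map_zero, add_zero]
    have hrad2 : ∀ y : L, η ⁅v₂, y⁆ = 0 := by
      intro y
      have h := hrad y
      rw [← hsum, add_lie, map_add, hrad1 y, zero_add] at h
      exact h
    by_cases h1 : v₁ = 0
    · have hv2' : v ∈ I₂ := by rw [← hsum, h1, zero_add]; exact hv₂
      obtain ⟨hsymp, hcon⟩ := forward_aux I₁ I₂ hcompl hdis η hη v hv2' hv0 hrad
      exact Or.inr ⟨⟨_, hsymp⟩, ⟨_, hcon⟩⟩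
    · by_cases h2 : v₂ = 0
      · have hv1' : v ∈ I₁ := by rw [← hsum, h2, add_zero]; exact hv₁
        obtain ⟨hsymp, hcon⟩ := forward_aux I₂ I₁ hcompl.symm hdis' η hη v hv1' hv0 hrad
        exact Or.inl ⟨⟨_, hcon⟩, ⟨_, hsymp⟩⟩
      · exfalso
        have hηv₁ : η v₁ ≠ 0 := fun h => h1 (hη.2 v₁ h (fun y _ => hrad1 y))
        have hηv₂ : η v₂ ≠ 0 := fun h => h2 (hη.2 v₂ h (fun y _ => hrad2 y))
        set u := (η v₂) • v₁ - (η v₁) • v₂ with hu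
        have hηu : η u = 0 := by simp [hu, mul_comm]
        have hu0 : u = 0 := hη.2 u hηu
          (fun y _ => by simp [hu, sub_lie, smul_lie, hrad1 y, hrad2 y])
        have heq : (η v₂) • v₁ = (η v₁) • v₂ := by rwa [hu, sub_eq_zero] at hu0
        have hmem : (η v₂) • v₁ ∈ I₁.toSubmodule ⊓ I₂.toSubmodule :=
          ⟨Submodule.smul_mem _ _ hv₁, heq ▸ Submodule.smul_mem _ _ hv₂⟩
        rw [hcompl.inf_eq_bot, Submodule.mem_bot] at hmem
        rcases smul_eq_zero.mp hmem with h | h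
        · exact hηv₂ h
        · exact h1 h
  · rintro (⟨⟨η₁, hη₁⟩, ⟨α₂, hα₂⟩⟩ | ⟨⟨α₁, hα₁⟩, ⟨η₂, hη₂⟩⟩)
    · exact backward_aux I₂ I₁ hcompl.symm hdis' α₂ hα₂ η₁ hη₁
    · exact backward_aux I₁ I₂ hcompl hdis α₁ hα₁ η₂ hη₂
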